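/- Let n ≥ 2, let ψ : ℝ^{n−1} → ℝ ∪ {±∞} be a concave function, and let Λ_ψ = {(y,z) ∈ ℝ^{n−1} × ℝ : z ≤ ψ(y)} be its (closed convex) hypograph. Then for every r > 0, the planar Ehrhard symmetrization commutes with the Gaussian Banaszczyk transform in the vertical direction: E₂(Λ_ψ ∘ (r·e_n)) = E₂(Λ_ψ) ∘ (r·e₂). -/

import Mathlib

open MeasureTheory Set
open scoped Pointwise RealInnerProductSpace ENNReal Classical

/-- The standard Gaussian measure on `ℝ^d`, with density `(2π)^(-d/2) exp(-‖x‖²/2)`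
with respect to Lebesgue measure. -/
noncomputable def gaussD (d : ℕ) : Measure (EuclideanSpace ℝ (Fin d)) :=
  volume.withDensity fun x =>
    ENNReal.ofReal ((2 * Real.pi) ^ (-(d : ℝ) / 2) * Real.exp (-‖x‖ ^ 2 / 2))

/-- The standard Gaussian measure on `ℝ`. -/
noncomputable def gauss1 : Measure ℝ :=
  volume.withDensity fun t =>
    ENNReal.ofReal ((2 * Real.pi) ^ (-(1 : ℝ) / 2) * Real.exp (-t ^ 2 / 2))

/-- The slice `(K - y) ∩ ℝu`, viewed as a subset of `ℝ` via the isometry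
`t ↦ t • (u / ‖u‖)`. -/
def lineSlice {n : ℕ} (K : Set (EuclideanSpace ℝ (Fin n)))
    (u y : EuclideanSpace ℝ (Fin n)) : Set ℝ :=
  {t : ℝ | y + t • (‖u‖⁻¹ • u) ∈ K}

/-- `Z_B(K, u)`: the set of `y ∈ u^⊥` such that `(K - y) ∩ ℝu` has Euclidean length
at least `2‖u‖`. -/
noncomputable def ZB {n : ℕ} (K : Set (EuclideanSpace ℝ (Fin n)))
    (u : EuclideanSpace ℝ (Fin n)) : Set (EuclideanSpace ℝ (Fin n)) :=
  {y | ⟪y, u⟫ = 0 ∧ ENNReal.ofReal (2 * ‖u‖) ≤ volume (lineSlice K u y)}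

/-- Banaszczyk's transform `K * u = (K + [-u, u]) ∩ (Z_B + ℝu)`, with `K * 0 = K`. -/
noncomputable def bTransform {n : ℕ} (K : Set (EuclideanSpace ℝ (Fin n)))
    (u : EuclideanSpace ℝ (Fin n)) : Set (EuclideanSpace ℝ (Fin n)) :=
  if u = 0 then K
  else (K + segment ℝ (-u) u) ∩ (ZB K u + Set.range fun t : ℝ => t • u)

/-- `Z_K(u)`: the set of `y ∈ u^⊥` such that `γ₁((K - y) ∩ ℝu) ≥ γ₁([-‖u‖, ‖u‖])`. -/
noncomputable def ZG {n : ℕ} (K : Set (EuclideanSpace ℝ (Fin n)))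
    (u : EuclideanSpace ℝ (Fin n)) : Set (EuclideanSpace ℝ (Fin n)) :=
  {y | ⟪y, u⟫ = 0 ∧ gauss1 (Set.Icc (-‖u‖) ‖u‖) ≤ gauss1 (lineSlice K u y)}

/-- The Gaussian Banaszczyk transform `K ∘ u = (K + [-u, u]) ∩ (Z_K(u) + ℝu)`,
with `K ∘ 0 = K`. -/
noncomputable def gTransform {n : ℕ} (K : Set (EuclideanSpace ℝ (Fin n)))
    (u : EuclideanSpace ℝ (Fin n)) : Set (EuclideanSpace ℝ (Fin n)) :=
  if u = 0 then K
  else (K + segment ℝ (-u) u) ∩ (ZG K u + Set.range fun t : ℝ => t • u)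

/-- `Φ`, the cumulative distribution function of the standard Gaussian on `ℝ`. -/
noncomputable def Phi (t : ℝ) : ℝ := (gauss1 (Set.Iic t)).toReal

/-- `Φ⁻¹ : [0,1] → ℝ ∪ {±∞}`, the (extended-real-valued) inverse of `Φ`. -/
noncomputable def PhiInv (p : ℝ) : EReal :=
  sSup ((fun t : ℝ => (t : EReal)) '' {t : ℝ | Phi t ≤ p})

/-- Embedding of `ℝ^{n-1} × ℝ` into `ℝ^n`, putting `z` in the last coordinate. -/
noncomputable def embed (n : ℕ) (y : EuclideanSpace ℝ (Fin (n - 1))) (z : ℝ) :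
    EuclideanSpace ℝ (Fin n) :=
  (EuclideanSpace.equiv (Fin n) ℝ).symm
    (fun j => if h : (j : ℕ) < n - 1 then y ⟨(j : ℕ), h⟩ else z)

/-- The planar Ehrhard symmetrization
`E₂(K) = {(x, z) ∈ ℝ² : x ≤ Φ⁻¹(γ_{n-1}(K_z))}`, where `K_z` is the orthogonal
projection of `(K - z eₙ) ∩ eₙ^⊥` onto `eₙ^⊥ ≅ ℝ^{n-1}` (with `eₙ` the last
standard basis vector). -/
noncomputable def ehrhardSymm2 (n : ℕ) (K : Set (EuclideanSpace ℝ (Fin n))) :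
    Set (EuclideanSpace ℝ (Fin 2)) :=
  {p | ((p 0 : ℝ) : EReal) ≤ PhiInv ((gaussD (n - 1) {y | embed n y (p 1) ∈ K}).toReal)}

/-- Projection of `ℝ^n` onto the first `n - 1` coordinates. -/
noncomputable def dropLast (n : ℕ) (x : EuclideanSpace ℝ (Fin n)) :
    EuclideanSpace ℝ (Fin (n - 1)) :=
  (EuclideanSpace.equiv (Fin (n - 1)) ℝ).symm fun j => x ⟨(j : ℕ), by have := j.2; omega⟩

/-- The hypograph `Λ_ψ = {(y, z) : z ≤ ψ(y)} ⊆ ℝ^n` of `ψ : ℝ^{n-1} → ℝ ∪ {±∞}`,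
with the `z`-axis in coordinate direction `e_i`. -/
def hypograph {n : ℕ} (ψ : EuclideanSpace ℝ (Fin (n - 1)) → EReal) (i : Fin n) :
    Set (EuclideanSpace ℝ (Fin n)) :=
  {x | ((x i : ℝ) : EReal) ≤ ψ (dropLast n x)}

namespace Aux

noncomputable def C1 : ℝ := (2 * Real.pi) ^ (-(1 : ℝ) / 2)

lemma C1_pos : 0 < C1 := Real.rpow_pos_of_pos (by positivity) _

lemma gauss1_apply {s : Set ℝ} (hs : MeasurableSet s) :
    gauss1 s = ∫⁻ t in s, ENNReal.ofReal (C1 * Real.exp (-t ^ 2 / 2)) := by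
  rw [gauss1, withDensity_apply _ hs]
  rfl

lemma dens_meas : Measurable fun t : ℝ => ENNReal.ofReal (C1 * Real.exp (-t ^ 2 / 2)) := by
  apply Measurable.ennreal_ofReal
  exact (continuous_const.mul (Real.continuous_exp.comp (by continuity))).measurable

lemma gauss1_le {s : Set ℝ} (hs : MeasurableSet s) :
    gauss1 s ≤ ENNReal.ofReal C1 * volume s := by
  rw [gauss1_apply hs]
  calc ∫⁻ t in s, ENNReal.ofReal (C1 * Real.exp (-t ^ 2 / 2)) ∂volume
      ≤ ∫⁻ _ in s, ENNReal.ofReal C1 ∂volume := by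
        apply setLIntegral_mono measurable_const
        intro x _
        apply ENNReal.ofReal_le_ofReal
        nlinarith [Real.exp_le_one_iff.2 (by nlinarith [sq_nonneg x] : -x ^ 2 / 2 ≤ 0), C1_pos,
          Real.exp_pos (-x ^ 2 / 2)]
    _ = ENNReal.ofReal C1 * volume s := by rw [setLIntegral_const, mul_comm]

lemma gauss1_singleton (c : ℝ) : gauss1 {c} = 0 :=
  le_antisymm (by simpa using gauss1_le (measurableSet_singleton c)) zero_le

lemma gauss1_univ_lt_top : gauss1 univ < ∞ := by
  have hint : Integrable (fun t : ℝ => Real.exp (-2⁻¹ * t ^ 2)) :=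
    integrable_exp_neg_mul_sq (by norm_num)
  have : gauss1 univ = ∫⁻ t, ENNReal.ofReal (C1 * Real.exp (-t ^ 2 / 2)) := by
    rw [gauss1_apply MeasurableSet.univ, setLIntegral_univ]
  rw [this]
  calc ∫⁻ t, ENNReal.ofReal (C1 * Real.exp (-t ^ 2 / 2))
      = ∫⁻ t, ENNReal.ofReal C1 * ENNReal.ofReal (Real.exp (-2⁻¹ * t ^ 2)) := by
        congr 1; funext t
        rw [← ENNReal.ofReal_mul C1_pos.le]
        ring_nf
    _ = ENNReal.ofReal C1 * ∫⁻ t, ENNReal.ofReal (Real.exp (-2⁻¹ * t ^ 2)) := by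
        exact lintegral_const_mul _ (Measurable.ennreal_ofReal
          (Continuous.measurable (by continuity)))
    _ < ∞ := ENNReal.mul_lt_top ENNReal.ofReal_lt_top hint.lintegral_lt_top

lemma gauss1_ne_top (s : Set ℝ) : gauss1 s ≠ ∞ :=
  (lt_of_le_of_lt (measure_mono (subset_univ s)) gauss1_univ_lt_top).ne

lemma gauss1_Iic (c : ℝ) : gauss1 (Iic c) = ENNReal.ofReal (Phi c) := by
  rw [Phi, ENNReal.ofReal_toReal (gauss1_ne_top _)]

lemma gauss1_Iio (c : ℝ) : gauss1 (Iio c) = ENNReal.ofReal (Phi c) := by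
  have h : gauss1 (Iic c) = gauss1 (Iio c) + gauss1 {c} := by
    rw [← measure_union (by simp) (measurableSet_singleton c), Set.Iio_union_right]
  rw [← gauss1_Iic, h, gauss1_singleton, add_zero]

lemma Phi_nonneg (t : ℝ) : 0 ≤ Phi t := ENNReal.toReal_nonneg

lemma gauss1_pos_of_Ioc {a b : ℝ} (hab : a < b) : 0 < gauss1 (Ioc a b) := by
  set M := max |a| |b| with hM
  have hd : ∀ t ∈ Ioc a b, ENNReal.ofReal (C1 * Real.exp (-M ^ 2 / 2))
      ≤ ENNReal.ofReal (C1 * Real.exp (-t ^ 2 / 2)) := by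
    intro t ht
    apply ENNReal.ofReal_le_ofReal
    have h1 : |t| ≤ M := by
      rw [abs_le]
      constructor
      · have := neg_abs_le a; have := le_abs_self b
        simp only [hM]
        nlinarith [ht.1, ht.2, le_max_left |a| |b|, le_max_right |a| |b|]
      · have := le_abs_self b
        nlinarith [ht.2, le_max_right |a| |b|]
    have : t ^ 2 ≤ M ^ 2 := by nlinarith [abs_nonneg t, sq_abs t, sq_abs M]
    have := Real.exp_le_exp.2 (by linarith : -M ^ 2 / 2 ≤ -t ^ 2 / 2)
    nlinarith [C1_pos]
  have : ENNReal.ofReal (C1 * Real.exp (-M ^ 2 / 2)) * volume (Ioc a b) ≤ gauss1 (Ioc a b) := by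
    rw [gauss1_apply measurableSet_Ioc]
    calc ENNReal.ofReal (C1 * Real.exp (-M ^ 2 / 2)) * volume (Ioc a b)
        = ∫⁻ _ in Ioc a b, ENNReal.ofReal (C1 * Real.exp (-M ^ 2 / 2)) := by
          rw [setLIntegral_const, mul_comm]
      _ ≤ _ := setLIntegral_mono dens_meas hd
  refine lt_of_lt_of_le ?_ this
  apply ENNReal.mul_pos
  · simp only [ne_eq, ENNReal.ofReal_eq_zero, not_le]
    exact mul_pos C1_pos (Real.exp_pos _)
  · rw [Real.volume_Ioc]
    simp only [ne_eq, ENNReal.ofReal_eq_zero, not_le]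
    linarith

lemma Phi_strictMono : StrictMono Phi := by
  intro a b hab
  have h : gauss1 (Iic b) = gauss1 (Iic a) + gauss1 (Ioc a b) := by
    rw [← measure_union (by rw [Set.disjoint_left]; intro x hx hx2; exact absurd hx2.1 (not_lt.2 hx)) measurableSet_Ioc]
    congr 1
    rw [Iic_union_Ioc_eq_Iic hab.le]
  have := gauss1_pos_of_Ioc hab
  rw [Phi, Phi, h]
  rw [ENNReal.toReal_add (gauss1_ne_top _) (gauss1_ne_top _)]
  have h2 : 0 < (gauss1 (Ioc a b)).toReal :=
    ENNReal.toReal_pos this.ne' (gauss1_ne_top _)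
  linarith

lemma Phi_mono : Monotone Phi := Phi_strictMono.monotone

lemma Phi_lipschitz : LipschitzWith (Real.toNNReal C1) Phi := by
  apply LipschitzWith.of_dist_le_mul
  intro a b
  wlog hab : b ≤ a generalizing a b
  · rw [dist_comm, dist_comm a b]; exact this b a (le_of_not_ge hab)
  have h : gauss1 (Iic a) = gauss1 (Iic b) + gauss1 (Ioc b a) := by
    rw [← measure_union (by rw [Set.disjoint_left]; intro x hx hx2; exact absurd hx2.1 (not_lt.2 hx)) measurableSet_Ioc]
    congr 1
    rw [Iic_union_Ioc_eq_Iic hab]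
  have hb : (gauss1 (Ioc b a)).toReal ≤ C1 * (a - b) := by
    have := gauss1_le measurableSet_Ioc (s := Ioc b a)
    rw [Real.volume_Ioc] at this
    have h2 : gauss1 (Ioc b a) ≤ ENNReal.ofReal (C1 * (a - b)) := by
      rwa [ENNReal.ofReal_mul C1_pos.le]
    calc (gauss1 (Ioc b a)).toReal ≤ (ENNReal.ofReal (C1 * (a - b))).toReal :=
          ENNReal.toReal_mono ENNReal.ofReal_ne_top h2
      _ ≤ C1 * (a - b) := by
          rw [ENNReal.toReal_ofReal (by nlinarith [C1_pos] : (0:ℝ) ≤ C1 * (a - b))]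
  have hPhi : Phi a - Phi b = (gauss1 (Ioc b a)).toReal := by
    rw [Phi, Phi, h, ENNReal.toReal_add (gauss1_ne_top _) (gauss1_ne_top _)]; ring
  rw [Real.dist_eq, Real.dist_eq]
  rw [abs_of_nonneg (by rw [hPhi]; exact ENNReal.toReal_nonneg),
    abs_of_nonneg (by linarith)]
  rw [Real.coe_toNNReal _ C1_pos.le, hPhi]
  linarith [hb]

lemma Phi_continuous : Continuous Phi := Phi_lipschitz.continuous

lemma gauss1_Icc {a b : ℝ} (hab : a ≤ b) :
    gauss1 (Icc a b) = ENNReal.ofReal (Phi b - Phi a) := by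
  have h : gauss1 (Iic b) = gauss1 (Iio a) + gauss1 (Icc a b) := by
    rw [← measure_union (by rw [Set.disjoint_left]; intro x hx hx2; exact absurd hx2.1 (not_le.2 hx)) measurableSet_Icc]
    congr 1
    rw [Iio_union_Icc_eq_Iic hab]
  rw [gauss1_Iio, gauss1_Iic] at h
  have hne := gauss1_ne_top (Icc a b)
  have h3 : Phi b = Phi a + (gauss1 (Icc a b)).toReal := by
    have := congrArg ENNReal.toReal h
    rwa [ENNReal.toReal_add ENNReal.ofReal_ne_top hne, ENNReal.toReal_ofReal (Phi_nonneg b),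
      ENNReal.toReal_ofReal (Phi_nonneg a)] at this
  rw [← ENNReal.ofReal_toReal hne]
  congr 1
  linarith


/-- The key characterization of `PhiInv`. -/
lemma le_phiInv_iff {a q : ℝ} : ((a : EReal) ≤ PhiInv q) ↔ Phi a ≤ q := by
  constructor
  · intro h
    by_contra hq
    push_neg at hq
    -- q < Phi a ; find δ with q < Phi (a - δ)
    have hc : ContinuousAt Phi a := Phi_continuous.continuousAt
    have : ∀ᶠ x in nhds a, q < Phi x := hc.eventually_const_lt hq
    obtain ⟨ε, hε, hball⟩ := Metric.eventually_nhds_iff.1 this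
    have hub : PhiInv q ≤ ((a - ε / 2 : ℝ) : EReal) := by
      apply sSup_le
      rintro x ⟨t, ht, rfl⟩
      simp only [mem_setOf_eq] at ht
      rw [EReal.coe_le_coe_iff]
      by_contra hlt
      push_neg at hlt
      -- a - ε/2 < t, so Phi t > q if t close... if t ≥ a then Phi t ≥ Phi a > q.
      rcases le_or_gt a t with h1 | h1
      · exact absurd (lt_of_lt_of_le hq (Phi_strictMono.monotone h1)) (not_lt.2 ht)
      · have : dist t a < ε := by
          rw [Real.dist_eq, abs_lt]; constructor <;> linarith
        exact absurd (hball this) (not_lt.2 ht)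
    have := le_trans h hub
    rw [EReal.coe_le_coe_iff] at this
    linarith
  · intro h
    exact le_sSup ⟨a, h, rfl⟩

lemma phiInv_lt_iff {a q : ℝ} : PhiInv q < (a : EReal) ↔ q < Phi a := by
  rw [← not_le, ← not_le, le_phiInv_iff]

/-- Existence of `c_r` with `Phi c_r = Phi r - Phi (-r)`. -/
lemma exists_cr {r : ℝ} (hr : 0 < r) : ∃ c, Phi c = Phi r - Phi (-r) := by
  set q := Phi r - Phi (-r) with hq
  have hq0 : 0 < q := by
    have := Phi_strictMono (show -r < r by linarith)
    linarith
  have hqr : q ≤ Phi r := by have := Phi_nonneg (-r); linarith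
  -- find t0 with Phi t0 < q
  have htend : Filter.Tendsto (fun k : ℕ => gauss1 (Iic (-(k : ℝ))))
      Filter.atTop (nhds (gauss1 (⋂ k : ℕ, Iic (-(k : ℝ))))) := by
    apply tendsto_measure_iInter_atTop
    · exact fun k => measurableSet_Iic.nullMeasurableSet
    · intro k l hkl
      apply Iic_subset_Iic.2
      simp only [neg_le_neg_iff, Nat.cast_le]
      exact hkl
    · exact ⟨0, gauss1_ne_top _⟩
  have hempty : (⋂ k : ℕ, Iic (-(k : ℝ))) = ∅ := by
    ext x
    simp only [mem_iInter, mem_Iic, mem_empty_iff_false, iff_false, not_forall]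
    obtain ⟨k, hk⟩ := exists_nat_gt (-x)
    exact ⟨k, by push_neg; linarith⟩
  rw [hempty, measure_empty] at htend
  have htendR : Filter.Tendsto (fun k : ℕ => Phi (-(k : ℝ))) Filter.atTop (nhds 0) := by
    have := (ENNReal.tendsto_toReal (by simp)).comp htend
    simpa [Phi, Function.comp_def] using this
  obtain ⟨k, hk⟩ := (htendR.eventually_lt_const hq0).exists
  -- IVT on [min (-k) r, r]
  have hle : min (-(k:ℝ)) r ≤ r := min_le_right _ _
  have hmem : q ∈ Icc (Phi (min (-(k:ℝ)) r)) (Phi r) := by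
    constructor
    · exact le_of_lt (lt_of_le_of_lt (Phi_strictMono.monotone (min_le_left _ _)) hk)
    · exact hqr
  obtain ⟨c, _, hc⟩ := intermediate_value_Icc hle Phi_continuous.continuousOn hmem
  exact ⟨c, hc⟩


lemma integrable_gauss_eucl (d : ℕ) :
    Integrable (fun x : EuclideanSpace ℝ (Fin d) => Real.exp (-‖x‖ ^ 2 / 2)) := by
  have h := GaussianFourier.integrable_cexp_neg_mul_sq_norm_add
    (V := EuclideanSpace ℝ (Fin d)) (b := (1/2 : ℂ)) (by norm_num) 0 0
  have h2 := h.norm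
  convert h2 using 2 with x
  simp only [zero_mul, add_zero, Complex.norm_exp]
  rw [show (-(1/2:ℂ) * (‖x‖:ℂ) ^ 2) = ((-(1/2) * ‖x‖ ^ 2 : ℝ) : ℂ) by push_cast; ring,
    Complex.ofReal_re]
  ring

lemma gaussD_meas (d : ℕ) :
    Measurable fun x : EuclideanSpace ℝ (Fin d) =>
      ENNReal.ofReal ((2 * Real.pi) ^ (-(d : ℝ) / 2) * Real.exp (-‖x‖ ^ 2 / 2)) := by
  apply Measurable.ennreal_ofReal
  apply Continuous.measurable
  continuity

lemma gaussD_univ_lt_top (d : ℕ) : gaussD d univ < ∞ := by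
  have hC : (0:ℝ) ≤ (2 * Real.pi) ^ (-(d : ℝ) / 2) :=
    (Real.rpow_pos_of_pos (by positivity) _).le
  rw [gaussD, withDensity_apply _ MeasurableSet.univ, setLIntegral_univ]
  calc ∫⁻ x : EuclideanSpace ℝ (Fin d),
        ENNReal.ofReal ((2 * Real.pi) ^ (-(d : ℝ) / 2) * Real.exp (-‖x‖ ^ 2 / 2))
      = ENNReal.ofReal ((2 * Real.pi) ^ (-(d : ℝ) / 2)) *
        ∫⁻ x : EuclideanSpace ℝ (Fin d), ENNReal.ofReal (Real.exp (-‖x‖ ^ 2 / 2)) := by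
        simp_rw [ENNReal.ofReal_mul hC]
        exact lintegral_const_mul _ (Measurable.ennreal_ofReal
          (Continuous.measurable (by continuity)))
    _ < ∞ := ENNReal.mul_lt_top ENNReal.ofReal_lt_top (integrable_gauss_eucl d).lintegral_lt_top

lemma gaussD_ne_top (d : ℕ) (s : Set (EuclideanSpace ℝ (Fin d))) : gaussD d s ≠ ∞ :=
  (lt_of_le_of_lt (measure_mono (subset_univ s)) (gaussD_univ_lt_top d)).ne


variable {n : ℕ}

lemma embed_apply_lt (y : EuclideanSpace ℝ (Fin (n - 1))) (z : ℝ) (j : Fin n)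
    (h : (j : ℕ) < n - 1) : embed n y z j = y ⟨(j : ℕ), h⟩ := by
  simp [embed, h]

lemma embed_apply_last (y : EuclideanSpace ℝ (Fin (n - 1))) (z : ℝ) (j : Fin n)
    (h : ¬ (j : ℕ) < n - 1) : embed n y z j = z := by
  simp [embed, h]

lemma dropLast_apply (x : EuclideanSpace ℝ (Fin n)) (j : Fin (n - 1)) :
    dropLast n x j = x ⟨(j : ℕ), by have := j.2; omega⟩ := rfl

lemma dropLast_embed (y : EuclideanSpace ℝ (Fin (n - 1))) (z : ℝ) :
    dropLast n (embed n y z) = y := by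
  ext j
  rw [dropLast_apply, embed_apply_lt (n := n) y z _ (by exact j.2)]

lemma embed_last (y : EuclideanSpace ℝ (Fin (n - 1))) (z : ℝ) (h : n - 1 < n) :
    embed n y z ⟨n - 1, h⟩ = z :=
  embed_apply_last y z _ (by simp)


lemma single_coord (i j : Fin n) : (EuclideanSpace.single i (1:ℝ)) j = if j = i then 1 else 0 :=
  EuclideanSpace.single_apply i 1 j

lemma dropLast_add_smul_single (h : n - 1 < n) (x : EuclideanSpace ℝ (Fin n)) (t : ℝ) :
    dropLast n (x + t • EuclideanSpace.single (⟨n - 1, h⟩ : Fin n) (1:ℝ)) = dropLast n x := by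
  ext j
  rw [dropLast_apply, dropLast_apply]
  have : ((⟨(j : ℕ), by have := j.2; omega⟩ : Fin n)) ≠ ⟨n - 1, h⟩ := by
    intro hc
    have := congrArg Fin.val hc
    simp at this
    have := j.2
    omega
  show x _ + t * (EuclideanSpace.single _ (1:ℝ)) _ = x _
  rw [single_coord]
  simp [this]

lemma coord_add_smul_single (h : n - 1 < n) (x : EuclideanSpace ℝ (Fin n)) (t : ℝ) :
    (x + t • EuclideanSpace.single (⟨n - 1, h⟩ : Fin n) (1:ℝ)) ⟨n - 1, h⟩
      = x ⟨n - 1, h⟩ + t := by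
  show x _ + t * (EuclideanSpace.single _ (1:ℝ)) _ = _
  rw [single_coord]
  simp

lemma norm_r_single (h : n - 1 < n) {r : ℝ} (hr : 0 < r) :
    ‖r • EuclideanSpace.single (⟨n - 1, h⟩ : Fin n) (1:ℝ)‖ = r := by
  rw [norm_smul, EuclideanSpace.norm_single]
  simp [abs_of_pos hr]

lemma inner_r_single (h : n - 1 < n) (r : ℝ) (y : EuclideanSpace ℝ (Fin n)) :
    ⟪y, r • EuclideanSpace.single (⟨n - 1, h⟩ : Fin n) (1:ℝ)⟫ = r * y ⟨n - 1, h⟩ := by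
  rw [real_inner_smul_right]
  rw [EuclideanSpace.inner_single_right]
  simp [mul_comm]

lemma r_single_ne_zero (h : n - 1 < n) {r : ℝ} (hr : 0 < r) :
    r • EuclideanSpace.single (⟨n - 1, h⟩ : Fin n) (1:ℝ) ≠ 0 := by
  intro hc
  have := congrArg (fun v : EuclideanSpace ℝ (Fin n) => v ⟨n - 1, h⟩) hc
  simp only at this
  rw [show (r • EuclideanSpace.single (⟨n - 1, h⟩ : Fin n) (1:ℝ)) ⟨n-1,h⟩
    = r * (EuclideanSpace.single (⟨n - 1, h⟩ : Fin n) (1:ℝ)) ⟨n-1,h⟩ from rfl, single_coord] at this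
  simp [hr.ne'] at this


lemma ereal_coe_le_add_coe_iff (z r : ℝ) (w : EReal) :
    ((z : EReal) ≤ w + (r : EReal)) ↔ ((z - r : ℝ) : EReal) ≤ w := by
  induction w with
  | bot =>
    simp only [EReal.bot_add, le_bot_iff]
    simp only [EReal.coe_sub]
    constructor
    · intro h
      exact absurd h (EReal.coe_ne_bot z)
    · intro h
      exact absurd h (by rw [← EReal.coe_sub]; exact EReal.coe_ne_bot _)
  | coe c =>
    rw [← EReal.coe_add, EReal.coe_le_coe_iff, EReal.coe_le_coe_iff]
    constructor <;> intro <;> linarith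
  | top => simp [EReal.top_add_coe, le_top]

lemma ereal_coe_max_le_iff (a b : ℝ) (w : EReal) :
    (((max a b : ℝ) : EReal) ≤ w) ↔ ((a : EReal) ≤ w ∧ (b : EReal) ≤ w) := by
  rcases max_cases a b with ⟨h1, h2⟩ | ⟨h1, h2⟩ <;> rw [h1] <;>
    constructor <;> intro h
  · exact ⟨h, le_trans (EReal.coe_le_coe_iff.2 h2) h⟩
  · exact h.1
  · exact ⟨le_trans (EReal.coe_le_coe_iff.2 h2.le) h, h⟩
  · exact h.2

lemma mem_segment_neg_self {V : Type*} [AddCommGroup V] [Module ℝ V] (u x : V) :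
    x ∈ segment ℝ (-u) u ↔ ∃ c : ℝ, c ∈ Icc (-1:ℝ) 1 ∧ x = c • u := by
  rw [segment_eq_image]
  constructor
  · rintro ⟨θ, hθ, rfl⟩
    rw [Set.mem_Icc] at hθ
    refine ⟨2 * θ - 1, ⟨by linarith [hθ.1], by linarith [hθ.2]⟩, ?_⟩
    simp only [smul_neg, sub_smul, add_smul, smul_smul]
    module
  · rintro ⟨c, hc, rfl⟩
    rw [Set.mem_Icc] at hc
    refine ⟨(c + 1) / 2, Set.mem_Icc.2 ⟨by linarith [hc.1], by linarith [hc.2]⟩, ?_⟩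
    module


/-- The gauss1 condition on EReal-cut slices. -/
lemma gauss1_slice_cond {q c0 : ℝ} (hq : 0 < q) (hc0 : Phi c0 = q) (w : EReal) :
    (ENNReal.ofReal q ≤ gauss1 {t : ℝ | ((t : ℝ) : EReal) ≤ w}) ↔ ((c0 : EReal) ≤ w) := by
  induction w with
  | bot =>
    have h1 : {t : ℝ | ((t : ℝ) : EReal) ≤ ⊥} = ∅ := by
      ext t; simp [EReal.coe_ne_bot]
    rw [h1]
    simp only [measure_empty, nonpos_iff_eq_zero]
    constructor
    · intro h; exact absurd h (by simp [hq])
    · intro h; exact absurd h (by simp [EReal.coe_ne_bot])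
  | coe c =>
    have h1 : {t : ℝ | ((t : ℝ) : EReal) ≤ (c : EReal)} = Iic c := by
      ext t; simp [EReal.coe_le_coe_iff]
    rw [h1, gauss1_Iic, EReal.coe_le_coe_iff]
    rw [ENNReal.ofReal_le_ofReal_iff (Phi_nonneg c), ← hc0]
    exact ⟨fun h => Phi_strictMono.le_iff_le.1 h, fun h => Phi_strictMono.monotone h⟩
  | top =>
    simp only [le_top, iff_true]
    rw [Set.setOf_true, ← hc0, ← gauss1_Iic]
    exact measure_mono (subset_univ _)


section Main

variable {n : ℕ}

lemma mem_hypograph (h : n - 1 < n) (ψ : EuclideanSpace ℝ (Fin (n - 1)) → EReal)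
    (x : EuclideanSpace ℝ (Fin n)) :
    x ∈ hypograph ψ (⟨n - 1, h⟩ : Fin n) ↔
      ((x ⟨n - 1, h⟩ : ℝ) : EReal) ≤ ψ (dropLast n x) := Iff.rfl

lemma smul_u_eq (h : n - 1 < n) {r : ℝ} (t : ℝ) :
    t • (r • EuclideanSpace.single (⟨n - 1, h⟩ : Fin n) (1:ℝ))
      = (t * r) • EuclideanSpace.single (⟨n - 1, h⟩ : Fin n) (1:ℝ) := by
  rw [smul_smul]

lemma norm_inv_smul_u (h : n - 1 < n) {r : ℝ} (hr : 0 < r) :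
    ‖r • EuclideanSpace.single (⟨n - 1, h⟩ : Fin n) (1:ℝ)‖⁻¹ •
        (r • EuclideanSpace.single (⟨n - 1, h⟩ : Fin n) (1:ℝ))
      = EuclideanSpace.single (⟨n - 1, h⟩ : Fin n) (1:ℝ) := by
  rw [norm_r_single h hr, smul_smul, inv_mul_cancel₀ hr.ne', one_smul]

lemma lineSlice_hypograph (h : n - 1 < n) (ψ : EuclideanSpace ℝ (Fin (n - 1)) → EReal)
    {r : ℝ} (hr : 0 < r) (y : EuclideanSpace ℝ (Fin n)) :
    lineSlice (hypograph ψ (⟨n - 1, h⟩ : Fin n))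
        (r • EuclideanSpace.single (⟨n - 1, h⟩ : Fin n) (1:ℝ)) y
      = {t : ℝ | ((y ⟨n - 1, h⟩ + t : ℝ) : EReal) ≤ ψ (dropLast n y)} := by
  ext t
  rw [lineSlice, mem_setOf_eq, mem_setOf_eq, norm_inv_smul_u h hr, mem_hypograph h ψ,
    coord_add_smul_single h, dropLast_add_smul_single h]

/-- Generic sum-with-segment characterization. -/
lemma add_segment_char (h : n - 1 < n) {r : ℝ} (hr : 0 < r)
    (F : EuclideanSpace ℝ (Fin (n - 1)) → ℝ → Prop)
    (hmono : ∀ y a b, b ≤ a → F y a → F y b) :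
    {x : EuclideanSpace ℝ (Fin n) | F (dropLast n x) (x ⟨n - 1, h⟩)} +
        segment ℝ (-(r • EuclideanSpace.single (⟨n - 1, h⟩ : Fin n) (1:ℝ)))
          (r • EuclideanSpace.single (⟨n - 1, h⟩ : Fin n) (1:ℝ))
      = {x | F (dropLast n x) (x ⟨n - 1, h⟩ - r)} := by
  ext x
  rw [Set.mem_add]
  constructor
  · rintro ⟨k, hk, s, hs, rfl⟩
    obtain ⟨c, hc, rfl⟩ := (mem_segment_neg_self _ s).1 hs
    rw [mem_setOf_eq] at hk ⊢
    rw [smul_u_eq h, dropLast_add_smul_single h, coord_add_smul_single h]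
    apply hmono _ _ _ _ hk
    have : c * r ≤ r := by nlinarith [hc.2, hr]
    linarith
  · intro hx
    rw [mem_setOf_eq] at hx
    refine ⟨x + (-r) • EuclideanSpace.single (⟨n - 1, h⟩ : Fin n) (1:ℝ), ?_,
      r • EuclideanSpace.single (⟨n - 1, h⟩ : Fin n) (1:ℝ),
      (mem_segment_neg_self _ _).2 ⟨1, ⟨by norm_num, le_refl 1⟩, (one_smul ℝ _).symm⟩, ?_⟩
    · rw [mem_setOf_eq, dropLast_add_smul_single h, coord_add_smul_single h]
      exact hx
    · rw [add_assoc, ← add_smul]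
      simp

/-- Generic sum-with-line characterization. -/
lemma add_range_char (h : n - 1 < n) {r : ℝ} (hr : 0 < r)
    (P : EuclideanSpace ℝ (Fin (n - 1)) → Prop) :
    {y : EuclideanSpace ℝ (Fin n) | y ⟨n - 1, h⟩ = 0 ∧ P (dropLast n y)}
        + Set.range (fun t : ℝ => t • (r • EuclideanSpace.single (⟨n - 1, h⟩ : Fin n) (1:ℝ)))
      = {x | P (dropLast n x)} := by
  ext x
  rw [Set.mem_add]
  constructor
  · rintro ⟨y, hy, s, ⟨t, rfl⟩, rfl⟩
    rw [mem_setOf_eq] at hy ⊢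
    show P (dropLast n (y + t • (r • EuclideanSpace.single (⟨n - 1, h⟩ : Fin n) (1:ℝ))))
    rw [smul_u_eq h, dropLast_add_smul_single h]
    exact hy.2
  · intro hx
    rw [mem_setOf_eq] at hx
    refine ⟨x + (-(x ⟨n - 1, h⟩)) • EuclideanSpace.single (⟨n - 1, h⟩ : Fin n) (1:ℝ), ?_,
      (x ⟨n - 1, h⟩ / r) • (r • EuclideanSpace.single (⟨n - 1, h⟩ : Fin n) (1:ℝ)),
      ⟨x ⟨n - 1, h⟩ / r, rfl⟩, ?_⟩
    · rw [mem_setOf_eq, dropLast_add_smul_single h, coord_add_smul_single h]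
      exact ⟨by ring, hx⟩
    · rw [smul_u_eq h, div_mul_cancel₀ _ hr.ne', add_assoc, ← add_smul]
      simp

lemma ZG_hypograph (h : n - 1 < n) (ψ : EuclideanSpace ℝ (Fin (n - 1)) → EReal)
    {r : ℝ} (hr : 0 < r) {c0 : ℝ} (hc0 : Phi c0 = Phi r - Phi (-r))
    (hq : 0 < Phi r - Phi (-r)) :
    ZG (hypograph ψ (⟨n - 1, h⟩ : Fin n))
        (r • EuclideanSpace.single (⟨n - 1, h⟩ : Fin n) (1:ℝ))
      = {y : EuclideanSpace ℝ (Fin n) |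
          y ⟨n - 1, h⟩ = 0 ∧ ((c0 : EReal) ≤ ψ (dropLast n y))} := by
  ext y
  rw [ZG, mem_setOf_eq, mem_setOf_eq, inner_r_single h]
  constructor
  · rintro ⟨h1, h2⟩
    have hy : y ⟨n - 1, h⟩ = 0 := by
      rcases mul_eq_zero.1 h1 with h' | h'
      · exact absurd h' hr.ne'
      · exact h'
    refine ⟨hy, ?_⟩
    rw [lineSlice_hypograph h ψ hr, hy] at h2
    simp only [zero_add] at h2
    rw [norm_r_single h hr, gauss1_Icc (by linarith : -r ≤ r), ← hc0] at h2
    exact (gauss1_slice_cond (hc0 ▸ hq) rfl _).1 h2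
  · rintro ⟨hy, h2⟩
    refine ⟨by rw [hy, mul_zero], ?_⟩
    rw [lineSlice_hypograph h ψ hr, hy]
    simp only [zero_add]
    rw [norm_r_single h hr, gauss1_Icc (by linarith : -r ≤ r), ← hc0]
    exact (gauss1_slice_cond (hc0 ▸ hq) rfl _).2 h2

lemma gTransform_hypograph (h : n - 1 < n) (ψ : EuclideanSpace ℝ (Fin (n - 1)) → EReal)
    {r : ℝ} (hr : 0 < r) {c0 : ℝ} (hc0 : Phi c0 = Phi r - Phi (-r))
    (hq : 0 < Phi r - Phi (-r)) :
    gTransform (hypograph ψ (⟨n - 1, h⟩ : Fin n))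
        (r • EuclideanSpace.single (⟨n - 1, h⟩ : Fin n) (1:ℝ))
      = {x : EuclideanSpace ℝ (Fin n) |
          ((max (x ⟨n - 1, h⟩ - r) c0 : ℝ) : EReal) ≤ ψ (dropLast n x)} := by
  rw [gTransform, if_neg (r_single_ne_zero h hr)]
  have h1 := add_segment_char h hr (fun y a => ((a : ℝ) : EReal) ≤ ψ y)
      (fun y a b hba hab => le_trans (EReal.coe_le_coe_iff.2 hba) hab)
  have h2 : ZG (hypograph ψ (⟨n - 1, h⟩ : Fin n))
        (r • EuclideanSpace.single (⟨n - 1, h⟩ : Fin n) (1:ℝ))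
        + Set.range (fun t : ℝ => t • (r • EuclideanSpace.single (⟨n - 1, h⟩ : Fin n) (1:ℝ)))
      = {x : EuclideanSpace ℝ (Fin n) | ((c0 : ℝ) : EReal) ≤ ψ (dropLast n x)} := by
    rw [ZG_hypograph h ψ hr hc0 hq]
    exact add_range_char h hr (fun y => ((c0 : ℝ) : EReal) ≤ ψ y)
  ext x
  have e1 := Set.ext_iff.1 h1 x
  have e2 := Set.ext_iff.1 h2 x
  simp only [mem_setOf_eq] at e1 e2
  simp only [mem_inter_iff, mem_setOf_eq]
  rw [ereal_coe_max_le_iff]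
  exact and_congr e1 e2

end Main


noncomputable def Sset {d : ℕ} (ψ : EuclideanSpace ℝ (Fin d) → EReal) (w : ℝ) :
    Set (EuclideanSpace ℝ (Fin d)) := {y | (w : EReal) ≤ ψ y}

noncomputable def mval (n : ℕ) (ψ : EuclideanSpace ℝ (Fin (n - 1)) → EReal) (w : ℝ) : ℝ :=
  (gaussD (n - 1) (Sset ψ w)).toReal

section Main2

variable {n : ℕ} (h : n - 1 < n) (ψ : EuclideanSpace ℝ (Fin (n - 1)) → EReal)

lemma mem_embed_hypograph (y : EuclideanSpace ℝ (Fin (n - 1))) (z : ℝ) :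
    embed n y z ∈ hypograph ψ (⟨n - 1, h⟩ : Fin n) ↔ ((z : ℝ) : EReal) ≤ ψ y := by
  rw [mem_hypograph h ψ, dropLast_embed, embed_apply_last y z _ (by exact lt_irrefl _)]

lemma mval_anti : Antitone (mval n ψ) := by
  intro w w' hww
  apply ENNReal.toReal_mono (gaussD_ne_top _ _)
  apply measure_mono
  intro y hy
  exact le_trans (EReal.coe_le_coe_iff.2 hww) hy

lemma continuous_embed (w : ℝ) :
    Continuous fun y : EuclideanSpace ℝ (Fin (n - 1)) => embed n y w := by
  unfold embed
  apply Continuous.comp (EuclideanSpace.equiv (Fin n) ℝ).symm.continuous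
  apply continuous_pi
  intro j
  by_cases hj : (j : ℕ) < n - 1
  · have : (fun y : EuclideanSpace ℝ (Fin (n - 1)) =>
        if h' : (j : ℕ) < n - 1 then y ⟨(j : ℕ), h'⟩ else w)
        = fun y => y ⟨(j : ℕ), hj⟩ := by
      funext y; rw [dif_pos hj]
    rw [this]
    exact (EuclideanSpace.proj (⟨(j : ℕ), hj⟩ : Fin (n - 1))).continuous
  · have : (fun y : EuclideanSpace ℝ (Fin (n - 1)) =>
        if h' : (j : ℕ) < n - 1 then y ⟨(j : ℕ), h'⟩ else w)
        = fun _ => w := by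
      funext y; rw [dif_neg hj]
    rw [this]
    exact continuous_const

lemma Sset_closed (hcl : IsClosed (hypograph ψ (⟨n - 1, h⟩ : Fin n))) (w : ℝ) :
    IsClosed (Sset ψ w) := by
  have : Sset ψ w = (fun y => embed n y w) ⁻¹' (hypograph ψ (⟨n - 1, h⟩ : Fin n)) := by
    ext y
    rw [Sset, mem_setOf_eq, mem_preimage, mem_embed_hypograph h ψ]
  rw [this]
  exact IsClosed.preimage (continuous_embed w) hcl

lemma mval_leftcont (hcl : IsClosed (hypograph ψ (⟨n - 1, h⟩ : Fin n))) (c0 : ℝ) {b : ℝ}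
    (hb : mval n ψ c0 < b) : ∃ δ > 0, mval n ψ (c0 - δ) < b := by
  set s : ℕ → Set (EuclideanSpace ℝ (Fin (n - 1))) :=
    fun k => Sset ψ (c0 - 1 / (k + 1)) with hs
  have hmeas : ∀ k, NullMeasurableSet (s k) (gaussD (n - 1)) :=
    fun k => ((Sset_closed h ψ hcl _).measurableSet).nullMeasurableSet
  have hanti : Antitone s := by
    intro k l hkl y hy
    refine le_trans (EReal.coe_le_coe_iff.2 ?_) hy
    have h1 : (1 : ℝ) / (l + 1) ≤ 1 / (k + 1) := by
      apply div_le_div_of_nonneg_left (by norm_num) (by positivity)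
      exact_mod_cast Nat.add_le_add_right hkl 1
    linarith
  have hiInter : (⋂ k, s k) = Sset ψ c0 := by
    ext y
    simp only [mem_iInter, hs, Sset, mem_setOf_eq]
    constructor
    · intro hy
      by_contra hc
      push_neg at hc
      have hne_bot : ψ y ≠ ⊥ := by
        intro hbot
        have := hy 0
        rw [hbot, le_bot_iff] at this
        exact EReal.coe_ne_bot _ this
      have hne_top : ψ y ≠ ⊤ := (lt_trans hc (EReal.coe_lt_top c0)).ne
      set c := (ψ y).toReal with hcdef
      have hcoe : (c : EReal) = ψ y := EReal.coe_toReal hne_top hne_bot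
      rw [← hcoe, EReal.coe_lt_coe_iff] at hc
      obtain ⟨k, hk⟩ := exists_nat_one_div_lt (show 0 < c0 - c by linarith)
      have h2 := hy k
      rw [← hcoe, EReal.coe_le_coe_iff] at h2
      push_cast at hk h2
      linarith
    · intro hy k
      refine le_trans (EReal.coe_le_coe_iff.2 ?_) hy
      have : (0:ℝ) < 1 / ((k : ℝ) + 1) := by positivity
      linarith
  have htend : Filter.Tendsto (fun k => gaussD (n - 1) (s k)) Filter.atTop
      (nhds (gaussD (n - 1) (Sset ψ c0))) := by
    have := tendsto_measure_iInter_atTop hmeas hanti ⟨0, gaussD_ne_top _ _⟩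
    rwa [hiInter] at this
  have htendR : Filter.Tendsto (fun k : ℕ => mval n ψ (c0 - 1 / ((k : ℝ) + 1))) Filter.atTop
      (nhds (mval n ψ c0)) := by
    have := (ENNReal.tendsto_toReal (gaussD_ne_top _ _)).comp htend
    rw [show (ENNReal.toReal ∘ fun k : ℕ => (gaussD (n - 1)) (s k))
      = fun k : ℕ => mval n ψ (c0 - 1 / ((k : ℝ) + 1)) from rfl] at this
    exact this
  obtain ⟨k, hk⟩ := (htendR.eventually_lt_const hb).exists
  refine ⟨1 / ((k : ℝ) + 1), by positivity, ?_⟩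
  exact hk

/-- Condition for lower sets defined by an antitone, left-continuous function. -/
lemma gauss1_lower_cond {q c0 : ℝ} (hq0 : 0 < q) (hc0 : Phi c0 = q) (f : ℝ → ℝ)
    (hf : Antitone f) (hlc : ∀ b, f c0 < b → ∃ δ > 0, f (c0 - δ) < b) (a : ℝ) :
    (ENNReal.ofReal q ≤ gauss1 {t : ℝ | a ≤ f t}) ↔ a ≤ f c0 := by
  constructor
  · intro hle
    by_contra hab
    push_neg at hab
    obtain ⟨δ, hδ, hfd⟩ := hlc a hab
    have hsub : {t : ℝ | a ≤ f t} ⊆ Iio (c0 - δ) := by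
      intro t ht
      rw [mem_setOf_eq] at ht
      rw [mem_Iio]
      by_contra hc
      push_neg at hc
      exact absurd (le_trans ht (hf hc)) (not_le.2 hfd)
    have h1 : gauss1 {t : ℝ | a ≤ f t} ≤ ENNReal.ofReal (Phi (c0 - δ)) := by
      rw [← gauss1_Iio]
      exact measure_mono hsub
    have h2 : Phi (c0 - δ) < Phi c0 := Phi_strictMono (by linarith)
    have := le_trans hle h1
    rw [ENNReal.ofReal_le_ofReal_iff (Phi_nonneg _), ← hc0] at this
    linarith
  · intro hle
    have hsub : Iic c0 ⊆ {t : ℝ | a ≤ f t} := by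
      intro t ht
      rw [mem_Iic] at ht
      exact le_trans hle (hf ht)
    calc ENNReal.ofReal q = gauss1 (Iic c0) := by rw [gauss1_Iic, hc0]
      _ ≤ _ := measure_mono hsub

end Main2


section Fin2

variable {n : ℕ} (ψ : EuclideanSpace ℝ (Fin (n - 1)) → EReal)

lemma coord0_add (h2 : (2:ℕ) - 1 < 2) (y : EuclideanSpace ℝ (Fin 2)) (t : ℝ) :
    (y + t • EuclideanSpace.single (⟨2 - 1, h2⟩ : Fin 2) (1:ℝ)) 0 = y 0 := by
  have := congrArg (fun v : EuclideanSpace ℝ (Fin (2 - 1)) => v (⟨0, by omega⟩ : Fin (2 - 1)))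
    (dropLast_add_smul_single h2 y t)
  exact this

end Fin2

end Aux

open Aux in
/-- **Claim 2.** For a concave `ψ : ℝ^{n-1} → ℝ ∪ {±∞}` with (closed convex) hypograph
`Λ_ψ`, the planar Ehrhard symmetrization commutes with the Gaussian Banaszczyk
transform in the vertical direction: `E₂(Λ_ψ ∘ (r eₙ)) = E₂(Λ_ψ) ∘ (r e₂)`. -/
theorem ehrhardSymm2_gTransform_comm (n : ℕ) (hn : 2 ≤ n)
    (ψ : EuclideanSpace ℝ (Fin (n - 1)) → EReal)
    (hconv : Convex ℝ (hypograph ψ (⟨n - 1, by omega⟩ : Fin n)))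
    (hcl : IsClosed (hypograph ψ (⟨n - 1, by omega⟩ : Fin n)))
    (r : ℝ) (hr : 0 < r) :
    ehrhardSymm2 n (gTransform (hypograph ψ (⟨n - 1, by omega⟩ : Fin n))
        (r • EuclideanSpace.single (⟨n - 1, by omega⟩ : Fin n) 1))
      = gTransform (ehrhardSymm2 n (hypograph ψ (⟨n - 1, by omega⟩ : Fin n)))
          (r • EuclideanSpace.single (1 : Fin 2) 1) := by
  have h : n - 1 < n := by omega
  have h2 : (2:ℕ) - 1 < 2 := by omega
  have h12 : (1 : Fin 2) = (⟨2 - 1, h2⟩ : Fin 2) := rfl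
  obtain ⟨c0, hc0⟩ := exists_cr hr
  have hq : 0 < Phi r - Phi (-r) := by
    have := Phi_strictMono (show -r < r by linarith)
    linarith
  -- LHS
  have hLHS : ehrhardSymm2 n (gTransform (hypograph ψ (⟨n - 1, by omega⟩ : Fin n))
      (r • EuclideanSpace.single (⟨n - 1, by omega⟩ : Fin n) 1))
      = {p : EuclideanSpace ℝ (Fin 2) |
          ((p 0 : ℝ) : EReal) ≤ PhiInv (mval n ψ (max (p 1 - r) c0))} := by
    unfold ehrhardSymm2
    ext p
    simp only [mem_setOf_eq]
    have hset : {y | embed n y (p 1) ∈ gTransform (hypograph ψ (⟨n - 1, by omega⟩ : Fin n))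
        (r • EuclideanSpace.single (⟨n - 1, by omega⟩ : Fin n) 1)}
        = Sset ψ (max (p 1 - r) c0) := by
      rw [show (⟨n - 1, by omega⟩ : Fin n) = (⟨n - 1, h⟩ : Fin n) from rfl]
      rw [gTransform_hypograph h ψ hr hc0 hq]
      ext y
      rw [mem_setOf_eq, mem_setOf_eq, dropLast_embed,
        embed_apply_last y (p 1) _ (by exact lt_irrefl _), Sset, mem_setOf_eq]
    rw [hset]
    rfl
  -- E₂K
  have hE : ehrhardSymm2 n (hypograph ψ (⟨n - 1, by omega⟩ : Fin n))
      = {p : EuclideanSpace ℝ (Fin 2) | ((p 0 : ℝ) : EReal) ≤ PhiInv (mval n ψ (p 1))} := by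
    unfold ehrhardSymm2
    ext p
    simp only [mem_setOf_eq]
    have hset : {y | embed n y (p 1) ∈ hypograph ψ (⟨n - 1, by omega⟩ : Fin n)}
        = Sset ψ (p 1) := by
      ext y
      rw [mem_setOf_eq, Sset, mem_setOf_eq,
        mem_embed_hypograph h ψ y (p 1)]
    rw [hset]
    rfl
  rw [hLHS, hE, h12]
  -- now everything on the Fin 2 side
  set mm := mval n ψ with hmm
  -- the set as F-form
  have hFset : {p : EuclideanSpace ℝ (Fin 2) | ((p 0 : ℝ) : EReal) ≤ PhiInv (mm (p ⟨2 - 1, h2⟩))}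
      = {x : EuclideanSpace ℝ (Fin 2) |
          ((dropLast 2 x ⟨0, by omega⟩ : ℝ) : EReal) ≤ PhiInv (mm (x ⟨2 - 1, h2⟩))} := rfl
  rw [gTransform, if_neg (r_single_ne_zero h2 hr), hFset]
  have hseg := add_segment_char h2 hr
    (fun (v : EuclideanSpace ℝ (Fin (2 - 1))) (a : ℝ) =>
      ((v ⟨0, by omega⟩ : ℝ) : EReal) ≤ PhiInv (mm a))
    (fun v a b hba hab => by
      refine le_trans hab ?_
      apply sSup_le_sSup
      intro x hx
      obtain ⟨t, ht, rfl⟩ := hx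
      exact ⟨t, le_trans ht (mval_anti ψ hba), rfl⟩)
  have hZG : ZG {x : EuclideanSpace ℝ (Fin 2) |
        ((dropLast 2 x ⟨0, by omega⟩ : ℝ) : EReal) ≤ PhiInv (mm (x ⟨2 - 1, h2⟩))}
        (r • EuclideanSpace.single (⟨2 - 1, h2⟩ : Fin 2) (1:ℝ))
      = {y : EuclideanSpace ℝ (Fin 2) | y ⟨2 - 1, h2⟩ = 0 ∧
          (fun v : EuclideanSpace ℝ (Fin (2 - 1)) =>
            Phi (v ⟨0, by omega⟩) ≤ mm c0) (dropLast 2 y)} := by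
    ext y
    rw [ZG, mem_setOf_eq, mem_setOf_eq, inner_r_single h2]
    have hiff : r * y ⟨2 - 1, h2⟩ = 0 ↔ y ⟨2 - 1, h2⟩ = 0 := by
      constructor
      · intro h1
        rcases mul_eq_zero.1 h1 with h' | h'
        · exact absurd h' hr.ne'
        · exact h'
      · intro h1; rw [h1, mul_zero]
    rw [hiff]
    apply and_congr_right
    intro hy1
    have hslice : lineSlice {x : EuclideanSpace ℝ (Fin 2) |
          ((dropLast 2 x ⟨0, by omega⟩ : ℝ) : EReal) ≤ PhiInv (mm (x ⟨2 - 1, h2⟩))}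
          (r • EuclideanSpace.single (⟨2 - 1, h2⟩ : Fin 2) (1:ℝ)) y
        = {t : ℝ | Phi (y 0) ≤ mm t} := by
      ext t
      rw [lineSlice, mem_setOf_eq, norm_inv_smul_u h2 hr, mem_setOf_eq]
      rw [show ((y + t • EuclideanSpace.single (⟨2 - 1, h2⟩ : Fin 2) (1:ℝ)))
          ⟨2 - 1, h2⟩ = y ⟨2 - 1, h2⟩ + t from coord_add_smul_single h2 y t]
      rw [hy1, zero_add]
      rw [show (dropLast 2 (y + t • EuclideanSpace.single (⟨2 - 1, h2⟩ : Fin 2) (1:ℝ))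
          ⟨0, by omega⟩ : ℝ) = y 0 from coord0_add h2 y t]
      rw [mem_setOf_eq, le_phiInv_iff]
    rw [hslice, norm_r_single h2 hr, gauss1_Icc (by linarith : -r ≤ r)]
    exact gauss1_lower_cond hq hc0 mm (mval_anti ψ)
      (fun b hb => mval_leftcont h ψ hcl c0 hb) (Phi (y 0))
  rw [hZG, hseg, add_range_char h2 hr
    (fun v : EuclideanSpace ℝ (Fin (2 - 1)) => Phi (v ⟨0, by omega⟩) ≤ mm c0)]
  ext p
  simp only [mem_setOf_eq, mem_inter_iff]
  rw [le_phiInv_iff, le_phiInv_iff]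
  rw [show (dropLast 2 p ⟨0, by omega⟩ : ℝ) = p 0 from rfl,
    show (p ⟨2 - 1, h2⟩ : ℝ) = p 1 from rfl]
  rw [hmm, (mval_anti ψ).map_max, le_min_iff]
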